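/- Let n ≥ 1, α > 0, μ > 0, L ≥ 0, and let f : ℝⁿ → ℝ be L-smooth. Then for every p ∈ ℝⁿ, ‖∇f(p) − (n/(μα²)) • ∫ f(p + μ•v) • v dσ_α(v)‖ ≤ L·n·α·μ/2, where the integral is over v drawn from the uniform probability measure σ_α on the origin-centered sphere of radius α. -/

import Mathlib

open MeasureTheory RealInnerProductSpace

private lemma quad_taylor {F : Type*} [NormedAddCommGroup F] [InnerProductSpace ℝ F]
    [CompleteSpace F]
    (f : F → ℝ) (hf : Differentiable ℝ f) {L : ℝ}
    (hs : ∀ x y, ‖gradient f x - gradient f y‖ ≤ L * ‖x - y‖) (x h : F) :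
    |f (x + h) - f x - ⟪gradient f x, h⟫| ≤ L / 2 * ‖h‖ ^ 2 := by
  set c : ℝ := ⟪gradient f x, h⟫ with hc
  set g : ℝ → ℝ := fun t => f (x + t • h) - f x - t * c with hgdef
  have hg' : ∀ t : ℝ, HasDerivAt g (⟪gradient f (x + t • h), h⟫ - c) t := by
    intro t
    have hcurve : HasDerivAt (fun t : ℝ => x + t • h) h t := by
      simpa using ((hasDerivAt_id t).smul_const h).const_add x
    have hfd : HasFDerivAt f ((InnerProductSpace.toDualMap ℝ F) (gradient f (x + t • h)))
        (x + t • h) := hasGradientAt_iff_hasFDerivAt.mp (hf _).hasGradientAt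
    have hcomp := hfd.comp_hasDerivAt t hcurve
    have h2 : HasDerivAt (fun t : ℝ => t * c) c t := hasDerivAt_mul_const c
    exact (hcomp.sub_const (f x)).sub h2
  have hB : ∀ t : ℝ, HasDerivAt (fun t : ℝ => L / 2 * ‖h‖ ^ 2 * t ^ 2) (L * ‖h‖ ^ 2 * t) t := by
    intro t
    have : HasDerivAt (fun y : ℝ => L / 2 * ‖h‖ ^ 2 * y ^ 2) (L / 2 * ‖h‖ ^ 2 * (2 * t)) t := by
      simpa using (hasDerivAt_pow 2 t).const_mul (L / 2 * ‖h‖ ^ 2)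
    convert this using 1; ring
  have hbound : ∀ t ∈ Set.Ico (0:ℝ) 1,
      ‖(⟪gradient f (x + t • h), h⟫ : ℝ) - c‖ ≤ L * ‖h‖ ^ 2 * t := by
    intro t ht
    have h1 : (⟪gradient f (x + t • h), h⟫ : ℝ) - c
        = ⟪gradient f (x + t • h) - gradient f x, h⟫ := by
      rw [hc, inner_sub_left]
    rw [Real.norm_eq_abs, h1]
    calc |(⟪gradient f (x + t • h) - gradient f x, h⟫ : ℝ)|
        ≤ ‖gradient f (x + t • h) - gradient f x‖ * ‖h‖ := abs_real_inner_le_norm _ _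
      _ ≤ (L * ‖t • h‖) * ‖h‖ := by
          apply mul_le_mul_of_nonneg_right _ (norm_nonneg h)
          simpa using hs (x + t • h) x
      _ = L * ‖h‖ ^ 2 * t := by
          rw [norm_smul, Real.norm_eq_abs, abs_of_nonneg ht.1]; ring
  have key := image_norm_le_of_norm_deriv_right_le_deriv_boundary
    (f := g) (a := 0) (b := 1)
    (fun t _ => (hg' t).continuousAt.continuousWithinAt)
    (fun t _ => (hg' t).hasDerivWithinAt)
    (by simp [hgdef] : ‖g 0‖ ≤ L / 2 * ‖h‖ ^ 2 * (0:ℝ) ^ 2)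
    hB hbound
  have := key (Set.right_mem_Icc.mpr zero_le_one)
  simpa [hgdef, Real.norm_eq_abs] using this

private lemma coord_le_norm {n : ℕ} (v : EuclideanSpace ℝ (Fin n)) (i : Fin n) : |v i| ≤ ‖v‖ := by
  have h1 : |v i| ^ 2 ≤ ‖v‖ ^ 2 := by
    rw [EuclideanSpace.norm_eq, Real.sq_sqrt (by positivity)]
    calc |v i| ^ 2 = ‖v i‖ ^ 2 := by rw [Real.norm_eq_abs]
      _ ≤ ∑ j, ‖v j‖ ^ 2 := Finset.single_le_sum (f := fun j => ‖v j‖ ^ 2)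
          (fun j _ => by positivity) (Finset.mem_univ i)
  calc |v i| = Real.sqrt (|v i| ^ 2) := (Real.sqrt_sq (abs_nonneg _)).symm
    _ ≤ Real.sqrt (‖v‖ ^ 2) := Real.sqrt_le_sqrt h1
    _ = ‖v‖ := Real.sqrt_sq (norm_nonneg _)

private lemma sum_sq_eq {n : ℕ} (v : EuclideanSpace ℝ (Fin n)) : ∑ i, v i * v i = ‖v‖ ^ 2 := by
  rw [← real_inner_self_eq_norm_sq]
  simp only [PiLp.inner_apply, RCLike.inner_apply, conj_trivial]

private lemma integral_rot {n : ℕ} (σ : Measure (EuclideanSpace ℝ (Fin n)))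
    (hσ_rot : ∀ R : EuclideanSpace ℝ (Fin n) ≃ₗᵢ[ℝ] EuclideanSpace ℝ (Fin n),
      Measure.map R σ = σ)
    {G : Type*} [NormedAddCommGroup G] [NormedSpace ℝ G]
    (R : EuclideanSpace ℝ (Fin n) ≃ₗᵢ[ℝ] EuclideanSpace ℝ (Fin n))
    (φ : EuclideanSpace ℝ (Fin n) → G) (hφ : Continuous φ) :
    ∫ v, φ v ∂σ = ∫ v, φ (R v) ∂σ := by
  conv_lhs => rw [← hσ_rot R]
  rw [integral_map R.continuous.measurable.aemeasurable]
  rw [hσ_rot R]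
  exact hφ.aestronglyMeasurable

/-- mean zero -/
private lemma mean_zero {n : ℕ} {α : ℝ} (σ : Measure (EuclideanSpace ℝ (Fin n)))
    [IsProbabilityMeasure σ]
    (hσ_sphere : ∀ᵐ v ∂σ, ‖v‖ = α)
    (hσ_rot : ∀ R : EuclideanSpace ℝ (Fin n) ≃ₗᵢ[ℝ] EuclideanSpace ℝ (Fin n),
      Measure.map R σ = σ) :
    ∫ v, v ∂σ = 0 := by
  have key := integral_rot σ hσ_rot (LinearIsometryEquiv.neg ℝ) (fun v => v) continuous_id
  simp only [LinearIsometryEquiv.coe_neg] at key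
  rw [integral_neg] at key
  have h2 : (2 : ℝ) • (∫ v, v ∂σ) = 0 := by
    rw [two_smul]; nth_rewrite 1 [key]; simp
  have := smul_eq_zero.mp h2
  simpa using this

/-- second moments -/
private lemma second_moment {n : ℕ} (hn : 1 ≤ n) {α : ℝ} (hα : 0 < α)
    (σ : Measure (EuclideanSpace ℝ (Fin n))) [IsProbabilityMeasure σ]
    (hσ_sphere : ∀ᵐ v ∂σ, ‖v‖ = α)
    (hσ_rot : ∀ R : EuclideanSpace ℝ (Fin n) ≃ₗᵢ[ℝ] EuclideanSpace ℝ (Fin n),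
      Measure.map R σ = σ)
    (g : EuclideanSpace ℝ (Fin n)) :
    ∫ v, (⟪g, v⟫ : ℝ) • v ∂σ = (α ^ 2 / n) • g := by
  have hcont : ∀ i : Fin n, Continuous (fun v : EuclideanSpace ℝ (Fin n) => v i) :=
    fun i => (EuclideanSpace.proj i).continuous
  have hint2 : ∀ i j : Fin n, Integrable (fun v : EuclideanSpace ℝ (Fin n) => v i * v j) σ := by
    intro i j
    refine ⟨((hcont i).mul (hcont j)).aestronglyMeasurable,
      HasFiniteIntegral.of_bounded (C := α * α) ?_⟩
    filter_upwards [hσ_sphere] with v hv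
    rw [Real.norm_eq_abs, abs_mul]
    exact mul_le_mul ((coord_le_norm v i).trans hv.le) ((coord_le_norm v j).trans hv.le)
      (abs_nonneg _) hα.le
  set M : Fin n → Fin n → ℝ := fun i j => ∫ v, v i * v j ∂σ with hM
  have hoff : ∀ i j : Fin n, i ≠ j → M i j = 0 := by
    intro i j hij
    classical
    set R := LinearIsometryEquiv.piLpCongrRight 2 (fun k : Fin n =>
      if k = i then LinearIsometryEquiv.neg ℝ (E := ℝ) else LinearIsometryEquiv.refl ℝ ℝ) with hR
    have hRapp : ∀ (v : EuclideanSpace ℝ (Fin n)) (k : Fin n),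
        R v k = if k = i then -v k else v k := by
      intro v k
      simp only [hR, LinearIsometryEquiv.piLpCongrRight_apply]
      by_cases h : k = i
      · subst h; simp
      · simp [h]
    have key := integral_rot σ hσ_rot R (fun v => v i * v j) ((hcont i).mul (hcont j))
    have heq : (∫ v, R v i * R v j ∂σ) = ∫ v, -(v i * v j) ∂σ := by
      apply integral_congr_ae; filter_upwards with v
      rw [hRapp v i, hRapp v j, if_pos rfl, if_neg (Ne.symm hij)]
      ring
    rw [heq, integral_neg] at key
    have : M i j = -M i j := key
    linarith
  have hdiag : ∀ i j : Fin n, M i i = M j j := by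
    intro i j
    set R := LinearIsometryEquiv.piLpCongrLeft 2 ℝ ℝ (Equiv.swap i j) with hR
    have hRapp : ∀ v : EuclideanSpace ℝ (Fin n), R v i = v j := by
      intro v
      simp only [hR, LinearIsometryEquiv.piLpCongrLeft_apply, Equiv.piCongrLeft'_apply]
      rw [Equiv.symm_swap, Equiv.swap_apply_left]
    have key := integral_rot σ hσ_rot R (fun v => v i * v i) ((hcont i).mul (hcont i))
    have heq : (∫ v, R v i * R v i ∂σ) = ∫ v, v j * v j ∂σ := by
      apply integral_congr_ae; filter_upwards with v; rw [hRapp]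
    rw [heq] at key
    exact key
  have hsum : ∑ i, M i i = α ^ 2 := by
    rw [hM, ← integral_finset_sum _ (fun i _ => hint2 i i)]
    have : (∫ v, ∑ i, v i * v i ∂σ) = ∫ _v, (α ^ 2 : ℝ) ∂σ := by
      apply integral_congr_ae
      filter_upwards [hσ_sphere] with v hv
      rw [sum_sq_eq, hv]
    rw [this]; simp
  have hdiagval : ∀ i : Fin n, M i i = α ^ 2 / n := by
    intro i
    have hcard : (∑ j, M j j) = n * M i i := by
      rw [Finset.sum_congr rfl (fun j _ => hdiag j i)]
      simp [Finset.sum_const, mul_comm]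
    have hnne : (n : ℝ) ≠ 0 := Nat.cast_ne_zero.mpr (by omega)
    field_simp
    rw [← hsum, hcard]; ring
  have hintg : Integrable (fun v : EuclideanSpace ℝ (Fin n) => (⟪g, v⟫ : ℝ) • v) σ := by
    refine ⟨(by fun_prop : Continuous (fun v : EuclideanSpace ℝ (Fin n) => (⟪g, v⟫ : ℝ) • v)
      ).aestronglyMeasurable, HasFiniteIntegral.of_bounded (C := ‖g‖ * α * α) ?_⟩
    filter_upwards [hσ_sphere] with v hv
    rw [norm_smul, Real.norm_eq_abs]
    calc |(⟪g, v⟫ : ℝ)| * ‖v‖ ≤ (‖g‖ * ‖v‖) * ‖v‖ :=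
          mul_le_mul_of_nonneg_right (abs_real_inner_le_norm g v) (norm_nonneg v)
      _ = ‖g‖ * α * α := by rw [hv]
  have hproj : ∀ j : Fin n, (∫ v, (⟪g, v⟫ : ℝ) • v ∂σ) j = α ^ 2 / n * g j := by
    intro j
    have h1 : (∫ v, (⟪g, v⟫ : ℝ) • v ∂σ) j
        = ∫ v, (⟪g, v⟫ : ℝ) * v j ∂σ := by
      have h0 := (EuclideanSpace.proj j).integral_comp_comm hintg
      simp only [PiLp.proj_apply, _root_.map_smul, smul_eq_mul] at h0
      exact h0.symm
    rw [h1]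
    have h2 : (∫ v, (⟪g, v⟫ : ℝ) * v j ∂σ) = ∫ v, ∑ i, g i * (v i * v j) ∂σ := by
      apply integral_congr_ae; filter_upwards with v
      rw [PiLp.inner_apply]
      simp only [RCLike.inner_apply, conj_trivial]
      rw [Finset.sum_mul]
      exact Finset.sum_congr rfl fun i _ => by ring
    rw [h2, integral_finset_sum _ (fun i _ => (hint2 i j).const_mul (g i))]
    have h3 : ∀ i : Fin n, (∫ v, g i * (v i * v j) ∂σ) = g i * M i j := fun i =>
      integral_const_mul _ _
    rw [Finset.sum_congr rfl fun i _ => h3 i]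
    rw [Finset.sum_eq_single j (fun i _ hij => by rw [hoff i j hij, mul_zero])
      (fun h => absurd (Finset.mem_univ j) h)]
    rw [hdiagval j]; ring
  ext j
  rw [hproj j]
  simp [mul_comm]

/-- For an `L`-smooth `f : ℝⁿ → ℝ`, the one-point zeroth-order gradient
estimator satisfies `‖∇f(p) − (n/(μα²)) • ∫ f(p + μv) • v dσ(v)‖ ≤ Lnαμ/2`, where `σ` is
the uniform probability measure on the origin-centered sphere of radius `α`. -/
theorem gw_gradient_estimation_one_point
    (n : ℕ) (hn : 1 ≤ n) (α μ L : ℝ) (hα : 0 < α) (hμ : 0 < μ) (hL : 0 ≤ L)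
    (σ : Measure (EuclideanSpace ℝ (Fin n))) [IsProbabilityMeasure σ]
    (hσ_sphere : ∀ᵐ v ∂σ, ‖v‖ = α)
    (hσ_rot : ∀ R : EuclideanSpace ℝ (Fin n) ≃ₗᵢ[ℝ] EuclideanSpace ℝ (Fin n),
      Measure.map R σ = σ)
    (f : EuclideanSpace ℝ (Fin n) → ℝ)
    (hf_diff : Differentiable ℝ f)
    (hf_smooth : ∀ x y, ‖gradient f x - gradient f y‖ ≤ L * ‖x - y‖)
    (p : EuclideanSpace ℝ (Fin n)) :
    ‖gradient f p - ((n : ℝ) / (μ * α ^ 2)) • ∫ v, f (p + μ • v) • v ∂σ‖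
      ≤ L * n * α * μ / 2 := by
  have hfc : Continuous f := hf_diff.continuous
  have hnne : (n : ℝ) ≠ 0 := Nat.cast_ne_zero.mpr (by omega)
  set g := gradient f p with hg
  set r : EuclideanSpace ℝ (Fin n) → ℝ := fun v => f (p + μ • v) - f p - μ * ⟪g, v⟫ with hrdef
  have hrb : ∀ v, |r v| ≤ L / 2 * (μ * ‖v‖) ^ 2 := by
    intro v
    have h0 := quad_taylor f hf_diff hf_smooth p (μ • v)
    rw [real_inner_smul_right, norm_smul, Real.norm_eq_abs, abs_of_pos hμ] at h0
    simpa [hrdef, hg, mul_pow] using h0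
  have hrcont : Continuous r := by
    apply Continuous.sub
    · fun_prop
    · fun_prop
  have hid : Integrable (fun v : EuclideanSpace ℝ (Fin n) => v) σ :=
    ⟨continuous_id.aestronglyMeasurable,
      HasFiniteIntegral.of_bounded (C := α) (hσ_sphere.mono fun v h => h.le)⟩
  have hinner : Integrable (fun v : EuclideanSpace ℝ (Fin n) => (μ * ⟪g, v⟫) • v) σ := by
    refine ⟨(by fun_prop : Continuous (fun v : EuclideanSpace ℝ (Fin n) => (μ * ⟪g, v⟫) • v)
      ).aestronglyMeasurable,
      HasFiniteIntegral.of_bounded (C := μ * ‖g‖ * α * α) ?_⟩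
    filter_upwards [hσ_sphere] with v hv
    rw [norm_smul, Real.norm_eq_abs, abs_mul, abs_of_pos hμ]
    calc μ * |(⟪g, v⟫ : ℝ)| * ‖v‖ ≤ μ * (‖g‖ * ‖v‖) * ‖v‖ := by
          have := abs_real_inner_le_norm g v
          gcongr
      _ = μ * ‖g‖ * α * α := by rw [hv]; ring
  have hrint : Integrable (fun v : EuclideanSpace ℝ (Fin n) => r v • v) σ := by
    refine ⟨(hrcont.smul continuous_id).aestronglyMeasurable,
      HasFiniteIntegral.of_bounded (C := L / 2 * (μ * α) ^ 2 * α) ?_⟩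
    filter_upwards [hσ_sphere] with v hv
    rw [norm_smul, Real.norm_eq_abs, hv]
    have := hrb v
    rw [hv] at this
    have hα' : (0:ℝ) ≤ α := hα.le
    gcongr
  have hsplit : ∀ v : EuclideanSpace ℝ (Fin n),
      f (p + μ • v) • v = f p • v + (μ * ⟪g, v⟫) • v + r v • v := by
    intro v
    rw [← add_smul, ← add_smul]
    congr 1
    rw [hrdef]; ring
  have hI : (∫ v, f (p + μ • v) • v ∂σ)
      = μ • ((α ^ 2 / n) • g) + ∫ v, r v • v ∂σ := by
    have h1 : (∫ v, f (p + μ • v) • v ∂σ)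
        = ∫ v, (f p • v + (μ * ⟪g, v⟫) • v + r v • v) ∂σ := by
      exact integral_congr_ae (Filter.Eventually.of_forall hsplit)
    have hconst : Integrable (fun v : EuclideanSpace ℝ (Fin n) => f p • v) σ := hid.smul (f p)
    have hadd : Integrable (fun v : EuclideanSpace ℝ (Fin n) =>
        f p • v + (μ * ⟪g, v⟫) • v) σ := hconst.add hinner
    rw [h1, integral_add hadd hrint, integral_add hconst hinner]
    rw [integral_smul, mean_zero σ hσ_sphere hσ_rot, smul_zero, zero_add]
    have h2 : (∫ v, (μ * (⟪g, v⟫ : ℝ)) • v ∂σ) = μ • ∫ v, (⟪g, v⟫ : ℝ) • v ∂σ := by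
      rw [← integral_smul]
      exact integral_congr_ae (Filter.Eventually.of_forall fun v => by simp only []; rw [mul_smul])
    rw [h2, second_moment hn hα σ hσ_sphere hσ_rot g]
  have hcoef1 : ((n : ℝ) / (μ * α ^ 2)) • (μ • ((α ^ 2 / n) • g)) = g := by
    rw [smul_smul, smul_smul]
    have : (n : ℝ) / (μ * α ^ 2) * μ * (α ^ 2 / n) = 1 := by
      field_simp
    rw [this, one_smul]
  have hEq : g - ((n : ℝ) / (μ * α ^ 2)) • (∫ v, f (p + μ • v) • v ∂σ)
      = -(((n : ℝ) / (μ * α ^ 2)) • ∫ v, r v • v ∂σ) := by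
    rw [hI, smul_add, hcoef1]
    abel
  rw [hEq, norm_neg, norm_smul, Real.norm_eq_abs,
    abs_of_pos (by positivity : (0:ℝ) < (n : ℝ) / (μ * α ^ 2))]
  have hRn : ‖∫ v, r v • v ∂σ‖ ≤ L / 2 * (μ * α) ^ 2 * α := by
    have hb : ∀ᵐ v ∂σ, ‖r v • v‖ ≤ L / 2 * (μ * α) ^ 2 * α := by
      filter_upwards [hσ_sphere] with v hv
      rw [norm_smul, Real.norm_eq_abs, hv]
      have := hrb v
      rw [hv] at this
      have hα' : (0:ℝ) ≤ α := hα.le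
      gcongr
    have := norm_integral_le_of_norm_le_const hb
    simpa using this
  calc ((n : ℝ) / (μ * α ^ 2)) * ‖∫ v, r v • v ∂σ‖
      ≤ ((n : ℝ) / (μ * α ^ 2)) * (L / 2 * (μ * α) ^ 2 * α) := by
        gcongr
    _ = L * n * α * μ / 2 := by field_simp
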